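/- Let A be an n×n max-plus matrix with finite spectral radius λ, let B be an n×n matrix with Tr(B) ≤ 0, and let g be a vector. Define θ = λ ⊕ max_{1≤k≤n−1} max_{1≤i_1+⋯+i_k≤n−k} (1/k)·tr(A B^{i_1} ⋯ A B^{i_k}). Then θ is the minimum of x⁻ ⊗ A ⊗ x over all regular vectors x satisfying B ⊗ x ⊕ g ≤ x, and the minimum is attained exactly at the vectors x = ((-θ)⊗A ⊕ B)* ⊗ u with u regular and u ≥ g. -/

import Mathlib

noncomputable section

/-- Max-plus carrier: ℝ ∪ {-∞}. Addition ⊕ is `max`, multiplication ⊗ is `+`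
(with ⊥ = -∞ absorbing), zero is ⊥ and unit is `(0 : ℝ)`. -/
abbrev MP := WithBot ℝ

/-- Multiplicative conjugate: negate a finite value, send -∞ to -∞. -/
def mpInv (a : MP) : MP := a.map (fun t => -t)

/-- Max-plus matrix product. -/
def mpMulM {l m n : ℕ} (A : Fin l → Fin m → MP) (B : Fin m → Fin n → MP) :
    Fin l → Fin n → MP := fun i j => Finset.univ.sup fun k => A i k + B k j

/-- Max-plus matrix-vector product. -/
def mpMulV {m n : ℕ} (A : Fin m → Fin n → MP) (x : Fin n → MP) : Fin m → MP :=
  fun i => Finset.univ.sup fun j => A i j + x j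

/-- Max-plus identity matrix. -/
def mpId {n : ℕ} : Fin n → Fin n → MP := fun i j => if i = j then ((0:ℝ) : MP) else ⊥

/-- Max-plus matrix power. -/
def mpPow {n : ℕ} (A : Fin n → Fin n → MP) : ℕ → (Fin n → Fin n → MP)
  | 0 => mpId
  | k+1 => mpMulM (mpPow A k) A

/-- Max-plus trace. -/
def mpTr {n : ℕ} (A : Fin n → Fin n → MP) : MP := Finset.univ.sup fun i => A i i

/-- Tr(A) = tr A ⊕ tr A² ⊕ ⋯ ⊕ tr Aⁿ. -/
def mpTR {n : ℕ} (A : Fin n → Fin n → MP) : MP :=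
  (Finset.Icc 1 n).sup fun m => mpTr (mpPow A m)

/-- Kleene star A* = I ⊕ A ⊕ ⋯ ⊕ A^{n-1}. -/
def mpStar {n : ℕ} (A : Fin n → Fin n → MP) : Fin n → Fin n → MP :=
  fun i j => (Finset.range n).sup fun k => mpPow A k i j

/-- Max-plus spectral radius λ = max_{1≤m≤n} tr(A^m)^{1/m}. -/
def mpLam {n : ℕ} (A : Fin n → Fin n → MP) : MP :=
  (Finset.Icc 1 n).sup fun m => (mpTr (mpPow A m)).map (fun t => t / (m : ℝ))

/-- The alternating product B^{i₀} A B^{i₁} A ⋯ A B^{iₖ}. -/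
def mpChain {n : ℕ} (A B : Fin n → Fin n → MP) : (k : ℕ) → (Fin (k+1) → ℕ) → (Fin n → Fin n → MP)
  | 0, i => mpPow B (i 0)
  | (k+1), i => mpMulM (mpChain A B k (fun j => i j.castSucc)) (mpMulM A (mpPow B (i (Fin.last (k+1)))))

/-! ### basic sup/add lemmas -/

lemma mp_sup_add {α : Type*} (s : Finset α) (f : α → MP) (a : MP) :
    s.sup f + a = s.sup (fun x => f x + a) :=
  Finset.comp_sup_eq_sup_comp (· + a) (fun x y => (max_add_add_right x y a).symm) (WithBot.bot_add a)

lemma mp_add_sup {α : Type*} (s : Finset α) (f : α → MP) (a : MP) :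
    a + s.sup f = s.sup (fun x => a + f x) :=
  Finset.comp_sup_eq_sup_comp (a + ·) (fun x y => (max_add_add_left a x y).symm) (WithBot.add_bot a)

lemma mp_add_coe_cancel {a b : MP} (r : ℝ) (h : a + (r:MP) ≤ b + (r:MP)) : a ≤ b := by
  have := add_le_add_left h ((-r : ℝ) : MP)
  simpa [add_assoc, ← WithBot.coe_add] using this

/-! ### matrix algebra -/

section matalg
variable {n : ℕ}

lemma mpMulM_assoc {l m n p : ℕ} (P : Fin l → Fin m → MP) (Q : Fin m → Fin n → MP)
    (R : Fin n → Fin p → MP) : mpMulM (mpMulM P Q) R = mpMulM P (mpMulM Q R) := by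
  funext i j
  show Finset.univ.sup _ = Finset.univ.sup _
  simp only [mpMulM, mp_sup_add, mp_add_sup]
  rw [Finset.sup_comm]
  refine Finset.sup_congr rfl fun a _ => Finset.sup_congr rfl fun b _ => ?_
  rw [add_assoc]

lemma mpMulV_mulM {l m n : ℕ} (P : Fin l → Fin m → MP) (Q : Fin m → Fin n → MP)
    (x : Fin n → MP) : mpMulV (mpMulM P Q) x = mpMulV P (mpMulV Q x) := by
  funext i
  show Finset.univ.sup _ = Finset.univ.sup _
  simp only [mpMulM, mpMulV, mp_sup_add, mp_add_sup]
  rw [Finset.sup_comm]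
  refine Finset.sup_congr rfl fun a _ => Finset.sup_congr rfl fun b _ => ?_
  rw [add_assoc]

lemma mpMulV_id (x : Fin n → MP) : mpMulV (mpId (n := n)) x = x := by
  funext i
  apply le_antisymm
  · exact Finset.sup_le fun j _ => by
      by_cases h : i = j
      · subst h; simp [mpId]
      · simp [mpId, h]
  · exact le_trans (by simp [mpId]) (Finset.le_sup (f := fun j => mpId i j + x j) (Finset.mem_univ i))

lemma mpMulM_id_right (M : Fin n → Fin n → MP) : mpMulM M mpId = M := by
  funext i j
  apply le_antisymm
  · exact Finset.sup_le fun k _ => by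
      by_cases h : k = j
      · subst h; simp [mpId]
      · simp [mpId, h]
  · exact le_trans (by simp [mpId]) (Finset.le_sup (f := fun k => M i k + mpId k j) (Finset.mem_univ j))

lemma mpMulV_mono_vec {m n : ℕ} (M : Fin m → Fin n → MP) {x y : Fin n → MP}
    (h : ∀ j, x j ≤ y j) (i : Fin m) : mpMulV M x i ≤ mpMulV M y i :=
  Finset.sup_mono_fun fun j _ => add_le_add_right (h j) _

lemma mpMulV_mono_mat {m n : ℕ} {M M' : Fin m → Fin n → MP} (h : ∀ i j, M i j ≤ M' i j)
    (x : Fin n → MP) (i : Fin m) : mpMulV M x i ≤ mpMulV M' x i :=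
  Finset.sup_mono_fun fun j _ => add_le_add_left (h i j) _

lemma mpPow_succ' (M : Fin n → Fin n → MP) (m : ℕ) :
    mpPow M (m+1) = mpMulM M (mpPow M m) := by
  induction m with
  | zero => show mpMulM mpId M = mpMulM M mpId; rw [mpMulM_id_right]; funext i j
            apply le_antisymm
            · exact Finset.sup_le fun k _ => by
                by_cases h : i = k
                · subst h; simp [mpId]
                · simp [mpId, h]
            · exact le_trans (by simp [mpId]) (Finset.le_sup (f := fun k => mpId i k + M k j) (Finset.mem_univ i))
  | succ m ih => show mpMulM (mpPow M (m+1)) M = _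
                 rw [ih, mpMulM_assoc, ← ih]; rfl

lemma walk_le (M : Fin n → Fin n → MP) (m : ℕ) (u : ℕ → Fin n) :
    (∑ t ∈ Finset.range m, M (u t) (u (t+1))) ≤ mpPow M m (u 0) (u m) := by
  induction m with
  | zero => simp [mpPow, mpId]
  | succ m ih =>
      rw [Finset.sum_range_succ]
      calc (∑ t ∈ Finset.range m, M (u t) (u (t+1))) + M (u m) (u (m+1))
          ≤ mpPow M m (u 0) (u m) + M (u m) (u (m+1)) := add_le_add_left ih _
        _ ≤ mpPow M (m+1) (u 0) (u (m+1)) :=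
            Finset.le_sup (f := fun k => mpPow M m (u 0) k + M k (u (m+1))) (Finset.mem_univ (u m))

end matalg

section walks
variable {n : ℕ}

/-- weight of the path i :: l ++ [j]. -/
def pathw (M : Fin n → Fin n → MP) : Fin n → List (Fin n) → Fin n → MP
  | i, [], j => M i j
  | i, (a :: l), j => M i a + pathw M a l j

lemma pathw_concat (M : Fin n → Fin n → MP) (i k j : Fin n) (l : List (Fin n)) :
    pathw M i (l ++ [k]) j = pathw M i l k + M k j := by
  induction l generalizing i with
  | nil => simp [pathw]
  | cons a l ih => simp [pathw, ih, add_assoc]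

lemma pow_eq_sup_pathw (M : Fin n → Fin n → MP) (m : ℕ) (i j : Fin n) :
    mpPow M (m+1) i j = Finset.univ.sup (fun v : Fin m → Fin n => pathw M i (List.ofFn v) j) := by
  induction m generalizing j with
  | zero =>
      show (Finset.univ.sup fun k => mpPow M 0 i k + M k j)
        = Finset.univ.sup (fun v : Fin 0 → Fin n => pathw M i (List.ofFn v) j)
      apply le_antisymm
      · refine Finset.sup_le fun k _ => ?_
        by_cases h : i = k
        · subst h
          have h1 : mpPow M 0 i i + M i j = pathw M i (List.ofFn (fun _ : Fin 0 => i)) j := by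
            simp [mpPow, mpId, pathw]
          rw [h1]
          exact Finset.le_sup (f := fun v : Fin 0 → Fin n => pathw M i (List.ofFn v) j) (Finset.mem_univ _)
        · simp [mpPow, mpId, h]
      · refine Finset.sup_le fun v _ => ?_
        simp only [List.ofFn_zero]
        have h1 : pathw M i [] j = mpPow M 0 i i + M i j := by simp [mpPow, mpId, pathw]
        rw [h1]
        exact Finset.le_sup (f := fun k => mpPow M 0 i k + M k j) (Finset.mem_univ i)
  | succ m ih =>
      show (Finset.univ.sup fun k => mpPow M (m+1) i k + M k j)
        = Finset.univ.sup fun v : Fin (m+1) → Fin n => pathw M i (List.ofFn v) j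
      apply le_antisymm
      · refine Finset.sup_le fun k _ => ?_
        rw [ih]
        rw [mp_sup_add]
        refine Finset.sup_le fun v _ => ?_
        have : pathw M i (List.ofFn v) k + M k j = pathw M i (List.ofFn (Fin.snoc v k)) j := by
          rw [List.ofFn_succ']
          simp only [Fin.snoc_castSucc, Fin.snoc_last, List.concat_eq_append]
          rw [pathw_concat]
        rw [this]
        exact Finset.le_sup (f := fun v : Fin (m+1) → Fin n => pathw M i (List.ofFn v) j) (Finset.mem_univ _)
      · refine Finset.sup_le fun v _ => ?_
        rw [List.ofFn_succ', List.concat_eq_append, pathw_concat]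
        refine le_trans ?_ (Finset.le_sup (f := fun k => mpPow M (m+1) i k + M k j) (Finset.mem_univ (v (Fin.last m))))
        refine add_le_add_left ?_ _
        rw [ih]
        exact Finset.le_sup (f := fun w : Fin m → Fin n => pathw M i (List.ofFn w) (v (Fin.last m))) (Finset.mem_univ _)

lemma pathw_eq_sum (M : Fin n → Fin n → MP) (u : ℕ → Fin n) (m : ℕ) :
    pathw M (u 0) (List.ofFn (fun t : Fin m => u (t+1))) (u (m+1))
      = ∑ t ∈ Finset.range (m+1), M (u t) (u (t+1)) := by
  induction m generalizing u with
  | zero => simp [pathw]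
  | succ m ih =>
      have h2 := ih (fun t => u (t+1))
      simp only [zero_add] at h2
      simp only [List.ofFn_succ, pathw, Fin.val_succ, Fin.val_zero, zero_add]
      rw [Finset.sum_range_succ' (fun t => M (u t) (u (t+1))) (m+1)]
      rw [show (m + 1 + 1) = (m + 2) from rfl] at h2
      rw [show (∀ t : ℕ, t + 1 + 1 = t + 2) from fun t => rfl] at h2 ⊢
      rw [h2, add_comm]

end walks

section layer3
variable {n : ℕ}

lemma pow_le_of_walks (M : Fin n → Fin n → MP) (m : ℕ) (i j : Fin n) (c : MP)
    (h : ∀ u : ℕ → Fin n, u 0 = i → u (m+1) = j →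
      (∑ t ∈ Finset.range (m+1), M (u t) (u (t+1))) ≤ c) :
    mpPow M (m+1) i j ≤ c := by
  rw [pow_eq_sup_pathw]
  refine Finset.sup_le fun v _ => ?_
  have hnm : ¬ (m + 1 ≤ m) := by omega
  set u : ℕ → Fin n := fun t => if h0 : t = 0 then i else if h : t ≤ m then v ⟨t-1, by omega⟩ else j
    with hu
  have h0 : u 0 = i := by simp [hu]
  have hm : u (m+1) = j := by simp [hu, hnm]
  have hofn : (List.ofFn fun t : Fin m => u (t+1)) = List.ofFn v := by
    refine congrArg _ (funext fun t => ?_)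
    have ht : (t : ℕ) + 1 ≤ m := t.isLt
    simp [hu, ht]
  have key := pathw_eq_sum M u m
  rw [h0, hm, hofn] at key
  rw [key]
  exact h u h0 hm

lemma trace_le_of_closed_walks (M : Fin n → Fin n → MP) (m : ℕ) (hm : 1 ≤ m) (c : MP)
    (h : ∀ u : ℕ → Fin n, u m = u 0 → (∑ t ∈ Finset.range m, M (u t) (u (t+1))) ≤ c) :
    mpTr (mpPow M m) ≤ c := by
  obtain ⟨m', rfl⟩ : ∃ m', m = m' + 1 := ⟨m - 1, by omega⟩
  refine Finset.sup_le fun i _ => ?_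
  exact pow_le_of_walks M m' i i c fun u h0 h1 => h u (h1.trans h0.symm)

lemma sum_ite_le (m : ℕ) (f g : ℕ → MP) (c d : MP)
    (h : ∀ ε : ℕ → Bool, (∑ t ∈ Finset.range m, (if ε t then f t else g t)) + d ≤ c) :
    (∑ t ∈ Finset.range m, max (f t) (g t)) + d ≤ c := by
  induction m generalizing d with
  | zero => simpa using h (fun _ => false)
  | succ m ih =>
      rw [Finset.sum_range_succ, add_assoc, ← max_add_add_right, ← max_add_add_left]
      refine max_le ?_ ?_
      · refine ih _ (fun ε => ?_)
        have hh := h (fun t => if t = m then true else ε t)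
        rw [Finset.sum_range_succ] at hh
        have heq : (∑ t ∈ Finset.range m, (if (if t = m then true else ε t) = true then f t else g t))
            = ∑ t ∈ Finset.range m, (if ε t = true then f t else g t) :=
          Finset.sum_congr rfl fun t ht => by
            rw [if_neg (Nat.ne_of_lt (Finset.mem_range.1 ht))]
        have hl : (if (if m = m then true else ε m) = true then f m else g m) = f m := by simp
        rw [heq, hl, add_assoc] at hh
        exact hh
      · refine ih _ (fun ε => ?_)
        have hh := h (fun t => if t = m then false else ε t)
        rw [Finset.sum_range_succ] at hh
        have heq : (∑ t ∈ Finset.range m, (if (if t = m then false else ε t) = true then f t else g t))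
            = ∑ t ∈ Finset.range m, (if ε t = true then f t else g t) :=
          Finset.sum_congr rfl fun t ht => by
            rw [if_neg (Nat.ne_of_lt (Finset.mem_range.1 ht))]
        have hl : (if (if m = m then false else ε m) = true then f m else g m) = g m := by simp
        rw [heq, hl, add_assoc] at hh
        exact hh

lemma chain_snoc (A B : Fin n → Fin n → MP) (k : ℕ) (i' : Fin k → ℕ) (j : ℕ) :
    mpChain A B (k+1) (Fin.cons 0 (Fin.snoc i' j)) =
      mpMulM (mpChain A B k (Fin.cons 0 i')) (mpMulM A (mpPow B j)) := by
  have h1 : (fun p : Fin (k+1) => (Fin.cons 0 (Fin.snoc i' j) : Fin (k+2) → ℕ) p.castSucc)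
      = Fin.cons 0 i' := by
    funext p
    refine Fin.cases ?_ (fun q => ?_) p
    · simp
    · rw [← Fin.succ_castSucc]
      simp
  have h2 : (Fin.cons 0 (Fin.snoc i' j) : Fin (k+2) → ℕ) (Fin.last (k+1)) = j := by
    have hl : Fin.last (k+1) = Fin.succ (Fin.last k) := by
      ext; simp
    rw [hl, Fin.cons_succ, Fin.snoc_last]
  have h3 : mpChain A B (k+1) (Fin.cons 0 (Fin.snoc i' j)) =
      mpMulM (mpChain A B k fun p => (Fin.cons 0 (Fin.snoc i' j) : Fin (k+2) → ℕ) p.castSucc)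
        (mpMulM A (mpPow B ((Fin.cons 0 (Fin.snoc i' j) : Fin (k+2) → ℕ) (Fin.last (k+1))))) := rfl
  rw [h3, h1, h2]

lemma chain_zero (A B : Fin n → Fin n → MP) :
    ∀ (k : ℕ) (i : Fin (k+1) → ℕ), (∀ s, i s = 0) → mpChain A B k i = mpPow A k := by
  intro k
  induction k with
  | zero => intro i hi; show mpPow B (i 0) = _; rw [hi 0]; rfl
  | succ k ih =>
      intro i hi
      show mpMulM (mpChain A B k fun p => i p.castSucc) (mpMulM A (mpPow B (i (Fin.last (k+1))))) = _
      rw [hi (Fin.last (k+1)), ih _ (fun s => hi _)]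
      show mpMulM (mpPow A k) (mpMulM A mpId) = _
      rw [mpMulM_id_right]
      rfl

section bounds
variable (x : Fin n → ℝ)

lemma bound_pow (M : Fin n → Fin n → MP) (c : ℝ)
    (h : ∀ i j, M i j + ((x j : ℝ) : MP) ≤ (c : MP) + ((x i : ℝ) : MP)) :
    ∀ (m : ℕ) (i j), mpPow M m i j + ((x j : ℝ) : MP) ≤ (((m : ℝ) * c : ℝ) : MP) + ((x i : ℝ) : MP) := by
  intro m
  induction m with
  | zero =>
      intro i j
      by_cases hij : i = j
      · subst hij; simp [mpPow, mpId]
      · simp [mpPow, mpId, hij]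
  | succ m ih =>
      intro i j
      show (Finset.univ.sup fun k => mpPow M m i k + M k j) + _ ≤ _
      rw [mp_sup_add]
      refine Finset.sup_le fun k _ => ?_
      calc mpPow M m i k + M k j + (x j : MP)
          = mpPow M m i k + (M k j + (x j : MP)) := by rw [add_assoc]
        _ ≤ mpPow M m i k + ((c : MP) + (x k : MP)) := add_le_add_right (h k j) _
        _ = (mpPow M m i k + (x k : MP)) + (c : MP) := by
            rw [← add_assoc, add_assoc, add_comm ((c:ℝ):MP), ← add_assoc]
        _ ≤ (((m : ℝ) * c : ℝ) : MP) + (x i : MP) + (c : MP) := add_le_add_left (ih i k) _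
        _ = ((((m+1 : ℕ) : ℝ) * c : ℝ) : MP) + (x i : MP) := by
            rw [add_assoc, add_comm ((x i : ℝ) : MP), ← add_assoc, ← WithBot.coe_add]
            have hr : ((m : ℝ) * c + c) = (((m+1 : ℕ) : ℝ) * c) := by push_cast; ring
            rw [hr]
  
lemma bound_mul {c d : ℝ} {P Q : Fin n → Fin n → MP}
    (hP : ∀ i j, P i j + ((x j : ℝ) : MP) ≤ (c : MP) + ((x i : ℝ) : MP))
    (hQ : ∀ i j, Q i j + ((x j : ℝ) : MP) ≤ (d : MP) + ((x i : ℝ) : MP)) :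
    ∀ i j, mpMulM P Q i j + ((x j : ℝ) : MP) ≤ ((c + d : ℝ) : MP) + ((x i : ℝ) : MP) := by
  intro i j
  show (Finset.univ.sup fun k => P i k + Q k j) + _ ≤ _
  rw [mp_sup_add]
  refine Finset.sup_le fun k _ => ?_
  calc P i k + Q k j + (x j : MP) = P i k + (Q k j + (x j : MP)) := by rw [add_assoc]
    _ ≤ P i k + ((d : MP) + (x k : MP)) := add_le_add_right (hQ k j) _
    _ = (P i k + (x k : MP)) + (d : MP) := by
        rw [← add_assoc, add_assoc, add_comm ((d:ℝ):MP), ← add_assoc]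
    _ ≤ ((c : MP) + (x i : MP)) + (d : MP) := add_le_add_left (hP i k) _
    _ = ((c + d : ℝ) : MP) + (x i : MP) := by
        rw [add_assoc, add_comm ((x i : ℝ):MP), ← add_assoc, ← WithBot.coe_add]

lemma bound_chain (A B : Fin n → Fin n → MP) (c : ℝ)
    (hA : ∀ i j, A i j + ((x j : ℝ) : MP) ≤ (c : MP) + ((x i : ℝ) : MP))
    (hB : ∀ i j, B i j + ((x j : ℝ) : MP) ≤ ((0:ℝ) : MP) + ((x i : ℝ) : MP)) :
    ∀ (k : ℕ) (w : Fin (k+1) → ℕ) (i j),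
      mpChain A B k w i j + ((x j : ℝ) : MP) ≤ (((k : ℝ) * c : ℝ) : MP) + ((x i : ℝ) : MP) := by
  intro k
  induction k with
  | zero =>
      intro w i j
      have := bound_pow x B 0 hB (w 0) i j
      show mpPow B (w 0) i j + _ ≤ _
      simpa using this
  | succ k ih =>
      intro w i j
      show mpMulM (mpChain A B k fun p => w p.castSucc) (mpMulM A (mpPow B (w (Fin.last (k+1))))) i j + _ ≤ _
      have hB' : ∀ i j, mpPow B (w (Fin.last (k+1))) i j + ((x j : ℝ) : MP) ≤ ((0:ℝ) : MP) + ((x i : ℝ) : MP) := by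
        intro i j
        simpa using bound_pow x B 0 hB (w (Fin.last (k+1))) i j
      have hAB := bound_mul x hA hB'
      have := bound_mul x (ih (fun p => w p.castSucc)) (by simpa using hAB) i j
      refine le_trans this ?_
      apply le_of_eq
      have hr : ((k : ℝ) * c + c) = (((k+1 : ℕ) : ℝ) * c) := by push_cast; ring
      rw [hr]
end bounds
end layer3

section layer4
variable {n : ℕ}

lemma decomp (A B : Fin n → Fin n → MP) (θ : ℝ) (u : ℕ → Fin n) (ε : ℕ → Bool)
    (hε0 : ε 0 = true) (m : ℕ) : 1 ≤ m →
    ∃ k, 1 ≤ k ∧ k ≤ m ∧ ∃ i : Fin k → ℕ, (∑ s, i s) = m - k ∧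
      (∑ t ∈ Finset.range m,
        (if ε t then ((-θ : ℝ) : MP) + A (u t) (u (t+1)) else B (u t) (u (t+1))))
        ≤ ((-((k:ℝ) * θ) : ℝ) : MP) + mpChain A B k (Fin.cons 0 i) (u 0) (u m) := by
  induction m using Nat.strong_induction_on with
  | _ m IH =>
  intro hm
  classical
  set W : ℕ → MP := fun t =>
    if ε t then ((-θ : ℝ) : MP) + A (u t) (u (t+1)) else B (u t) (u (t+1)) with hW
  set F := (Finset.range m).filter (fun t => ε t = true) with hF
  have hF0 : 0 ∈ F := Finset.mem_filter.2 ⟨Finset.mem_range.2 (by omega), hε0⟩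
  have hFne : F.Nonempty := ⟨0, hF0⟩
  set T := F.max' hFne with hT
  have hTmem : T ∈ F := F.max'_mem hFne
  have hTlt : T < m := Finset.mem_range.1 (Finset.mem_filter.1 hTmem).1
  have hTtrue : ε T = true := (Finset.mem_filter.1 hTmem).2
  have hTmax : ∀ t, T < t → t < m → ε t = false := by
    intro t h1 h2
    by_contra h
    have ht : ε t = true := by
      cases hεt : ε t
      · exact absurd hεt h
      · rfl
    have : t ∈ F := Finset.mem_filter.2 ⟨Finset.mem_range.2 h2, ht⟩
    exact absurd (F.le_max' t this) (by omega)
  -- sum split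
  have hsplit : ∑ t ∈ Finset.range m, W t
      = ((∑ t ∈ Finset.range T, W t) + W T) + ∑ t ∈ Finset.Ico (T+1) m, W t := by
    rw [Finset.range_eq_Ico, ← Finset.sum_Ico_consecutive (fun t => W t) (Nat.zero_le T) (le_of_lt hTlt),
      ← Finset.range_eq_Ico]
    rw [Finset.sum_eq_sum_Ico_succ_bot hTlt (fun t => W t)]
    rw [← add_assoc]
  -- tail bound
  have htail : ∑ t ∈ Finset.Ico (T+1) m, W t ≤ mpPow B (m - (T+1)) (u (T+1)) (u m) := by
    have h1 : ∑ t ∈ Finset.Ico (T+1) m, W t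
        = ∑ t ∈ Finset.Ico (T+1) m, B (u t) (u (t+1)) := by
      refine Finset.sum_congr rfl fun t ht => ?_
      obtain ⟨ht1, ht2⟩ := Finset.mem_Ico.1 ht
      simp only [hW, hTmax t (by omega) ht2, Bool.false_eq_true, if_false]
    rw [h1, Finset.sum_Ico_eq_sum_range]
    have h3 := walk_le B (m - (T+1)) (fun s => u (T + 1 + s))
    have h4 : T + 1 + (m - (T+1)) = m := by omega
    rw [h4] at h3
    exact h3
  have hWT : W T = ((-θ : ℝ) : MP) + A (u T) (u (T+1)) := by
    simp [hW, hTtrue]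
  by_cases hT0 : T = 0
  · -- single A at the front
    refine ⟨1, le_refl 1, hm, Fin.snoc Fin.elim0 (m - 1), by simp [Fin.snoc], ?_⟩
    have hchain1 : mpChain A B 1 (Fin.cons 0 (Fin.snoc Fin.elim0 (m-1)))
        = mpMulM (mpChain A B 0 (Fin.cons 0 Fin.elim0)) (mpMulM A (mpPow B (m-1))) :=
      chain_snoc A B 0 Fin.elim0 (m-1)
    have hchain0 : mpChain A B 0 (Fin.cons 0 (Fin.elim0 : Fin 0 → ℕ)) = mpId := by
      show mpPow B ((Fin.cons 0 Fin.elim0 : Fin 1 → ℕ) 0) = mpId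
      rw [show (Fin.cons 0 Fin.elim0 : Fin 1 → ℕ) 0 = 0 from rfl]
      rfl
    rw [hT0] at hsplit hWT htail
    rw [hsplit, hchain1, hchain0, Finset.sum_range_zero, zero_add, hWT]
    have hstep : A (u 0) (u 1) + mpPow B (m-1) (u 1) (u m)
        ≤ mpMulM A (mpPow B (m-1)) (u 0) (u m) :=
      Finset.le_sup (f := fun k => A (u 0) k + mpPow B (m-1) k (u m)) (Finset.mem_univ (u 1))
    have hstep2 : mpMulM A (mpPow B (m-1)) (u 0) (u m)
        ≤ mpMulM mpId (mpMulM A (mpPow B (m-1))) (u 0) (u m) := by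
      refine le_trans ?_ (Finset.le_sup (f := fun k => mpId (u 0) k + mpMulM A (mpPow B (m-1)) k (u m)) (Finset.mem_univ (u 0)))
      simp [mpId]
    calc ((-θ : ℝ) : MP) + A (u 0) (u 1) + ∑ t ∈ Finset.Ico 1 m, W t
        ≤ ((-θ : ℝ) : MP) + A (u 0) (u 1) + mpPow B (m-1) (u 1) (u m) := add_le_add_right htail _
      _ = ((-θ : ℝ) : MP) + (A (u 0) (u 1) + mpPow B (m-1) (u 1) (u m)) := by rw [add_assoc]
      _ ≤ ((-θ : ℝ) : MP) + mpMulM mpId (mpMulM A (mpPow B (m-1))) (u 0) (u m) :=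
          add_le_add_right (le_trans hstep hstep2) _
      _ = _ := by
          have h5 : (-(((1:ℕ):ℝ)) * θ) = -θ := by push_cast; ring
          have h6 : (-((((1:ℕ)):ℝ) * θ)) = -θ := by push_cast; ring
          rw [h6]
  · -- T ≥ 1 : recurse on the prefix
    have hT1 : 1 ≤ T := by omega
    obtain ⟨k', hk'1, hk'T, i', hsum', hbound'⟩ := IH T hTlt hT1
    refine ⟨k' + 1, by omega, by omega, Fin.snoc i' (m - T - 1), ?_, ?_⟩
    · rw [Fin.sum_univ_castSucc]
      simp only [Fin.snoc_castSucc, Fin.snoc_last]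
      omega
    · rw [chain_snoc, hsplit]
      have hstep : A (u T) (u (T+1)) + mpPow B (m-T-1) (u (T+1)) (u m)
          ≤ mpMulM A (mpPow B (m-T-1)) (u T) (u m) :=
        Finset.le_sup (f := fun k => A (u T) k + mpPow B (m-T-1) k (u m)) (Finset.mem_univ (u (T+1)))
      have hstep2 : mpChain A B k' (Fin.cons 0 i') (u 0) (u T) + mpMulM A (mpPow B (m-T-1)) (u T) (u m)
          ≤ mpMulM (mpChain A B k' (Fin.cons 0 i')) (mpMulM A (mpPow B (m-T-1))) (u 0) (u m) :=
        Finset.le_sup (f := fun k => mpChain A B k' (Fin.cons 0 i') (u 0) k + mpMulM A (mpPow B (m-T-1)) k (u m)) (Finset.mem_univ (u T))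
      calc ((∑ t ∈ Finset.range T, W t) + W T) + ∑ t ∈ Finset.Ico (T+1) m, W t
          ≤ ((∑ t ∈ Finset.range T, W t) + W T) + mpPow B (m-(T+1)) (u (T+1)) (u m) := add_le_add_right htail _
        _ ≤ ((((-((k':ℝ) * θ) : ℝ) : MP) + mpChain A B k' (Fin.cons 0 i') (u 0) (u T)) + W T)
              + mpPow B (m-(T+1)) (u (T+1)) (u m) := by
            refine add_le_add_left (add_le_add_left hbound' _) _
        _ = ((-((k':ℝ) * θ) : ℝ) : MP) + ((-θ : ℝ) : MP)
              + (mpChain A B k' (Fin.cons 0 i') (u 0) (u T)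
                + (A (u T) (u (T+1)) + mpPow B (m-(T+1)) (u (T+1)) (u m))) := by
            rw [hWT]; abel
        _ ≤ ((-((k':ℝ) * θ) : ℝ) : MP) + ((-θ : ℝ) : MP)
              + (mpChain A B k' (Fin.cons 0 i') (u 0) (u T)
                + mpMulM A (mpPow B (m-T-1)) (u T) (u m)) := by
            refine add_le_add_right (add_le_add_right ?_ _) _
            exact hstep
        _ ≤ ((-((k':ℝ) * θ) : ℝ) : MP) + ((-θ : ℝ) : MP)
              + mpMulM (mpChain A B k' (Fin.cons 0 i')) (mpMulM A (mpPow B (m-T-1))) (u 0) (u m) :=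
            add_le_add_right hstep2 _
        _ = _ := by
            rw [← WithBot.coe_add]
            have h7 : (-((k':ℝ) * θ) + -θ) = (-(((k'+1 : ℕ):ℝ) * θ)) := by push_cast; ring
            rw [h7]

end layer4

section layer5
variable {n : ℕ}

lemma closed_walk_le (A B : Fin n → Fin n → MP) (θ : ℝ)
    (htrB : mpTR B ≤ ((0:ℝ) : MP))
    (hchain : ∀ k, 1 ≤ k → ∀ i : Fin k → ℕ, k + (∑ s, i s) ≤ n →
      mpTr (mpChain A B k (Fin.cons 0 i)) ≤ (((k:ℝ) * θ : ℝ) : MP))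
    (ℓ : ℕ) (hℓ1 : 1 ≤ ℓ) (hℓn : ℓ ≤ n) (w : ℕ → Fin n) (hw : w ℓ = w 0) :
    (∑ t ∈ Finset.range ℓ, max (((-θ : ℝ) : MP) + A (w t) (w (t+1))) (B (w t) (w (t+1))))
      ≤ ((0:ℝ) : MP) := by
  classical
  set wc : ℕ → Fin n := fun t => w (t % ℓ) with hwc
  have hagree : ∀ t, t ≤ ℓ → wc t = w t := by
    intro t ht
    rcases eq_or_lt_of_le ht with h | h
    · subst h; simp [hwc, Nat.mod_self, hw]
    · simp [hwc, Nat.mod_eq_of_lt h]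
  have hswap : (∑ t ∈ Finset.range ℓ, max (((-θ : ℝ) : MP) + A (w t) (w (t+1))) (B (w t) (w (t+1))))
      = ∑ t ∈ Finset.range ℓ, max (((-θ : ℝ) : MP) + A (wc t) (wc (t+1))) (B (wc t) (wc (t+1))) := by
    refine Finset.sum_congr rfl fun t ht => ?_
    have h1 := Finset.mem_range.1 ht
    rw [hagree t (by omega), hagree (t+1) (by omega)]
  rw [hswap]
  have hz : (∑ t ∈ Finset.range ℓ, max (((-θ : ℝ) : MP) + A (wc t) (wc (t+1))) (B (wc t) (wc (t+1)))) + ((0:ℝ):MP)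
      = ∑ t ∈ Finset.range ℓ, max (((-θ : ℝ) : MP) + A (wc t) (wc (t+1))) (B (wc t) (wc (t+1))) := by
    rw [WithBot.coe_zero, add_zero]
  rw [← hz]
  refine sum_ite_le ℓ _ _ _ _ (fun ε => ?_)
  rw [WithBot.coe_zero, add_zero]
  by_cases hex : ∃ r, r < ℓ ∧ ε r = true
  · -- rotate to start with an A-edge
    obtain ⟨r, hrℓ, hrt⟩ := hex
    haveI : NeZero ℓ := ⟨by omega⟩
    set u' : ℕ → Fin n := fun t => wc (r + t) with hu'
    set ε' : ℕ → Bool := fun t => ε ((r + t) % ℓ) with hε'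
    have hmod : ∀ s : ℕ, wc (s % ℓ) = wc s := by
      intro s
      show w (s % ℓ % ℓ) = w (s % ℓ)
      rw [Nat.mod_mod_of_dvd s dvd_rfl]
    have hrot : (∑ t ∈ Finset.range ℓ,
          (if ε t then ((-θ : ℝ) : MP) + A (wc t) (wc (t+1)) else B (wc t) (wc (t+1))))
        = ∑ t ∈ Finset.range ℓ,
          (if ε' t then ((-θ : ℝ) : MP) + A (u' t) (u' (t+1)) else B (u' t) (u' (t+1))) := by
      set G : ℕ → MP := fun s => if ε s then ((-θ : ℝ) : MP) + A (wc s) (wc (s+1)) else B (wc s) (wc (s+1)) with hG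
      have hterm : ∀ t, (if ε' t then ((-θ : ℝ) : MP) + A (u' t) (u' (t+1)) else B (u' t) (u' (t+1)))
          = G ((r + t) % ℓ) := by
        intro t
        have e1 : wc ((r+t) % ℓ) = u' t := by
          rw [hu']; exact hmod (r+t)
        have e2 : wc ((r+t) % ℓ + 1) = u' (t+1) := by
          rw [hu']
          have : (r + t) % ℓ + 1 ≡ r + (t + 1) [MOD ℓ] := by
            have h3 : (r + t) % ℓ ≡ r + t [MOD ℓ] := Nat.mod_modEq (r+t) ℓ
            have := Nat.ModEq.add_right 1 h3
            simpa [Nat.add_assoc] using this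
          calc wc ((r+t) % ℓ + 1) = w (((r+t) % ℓ + 1) % ℓ) := rfl
            _ = w ((r + (t+1)) % ℓ) := by rw [this]
            _ = wc (r + (t+1)) := rfl
        rw [hG]
        simp only [hε']
        rw [e1, e2]
      rw [Finset.sum_congr rfl (fun t _ => hterm t)]
      rw [← Fin.sum_univ_eq_sum_range (fun t => G ((r + t) % ℓ)) ℓ,
          ← Fin.sum_univ_eq_sum_range (fun t => G t) ℓ]
      set r' : Fin ℓ := ⟨r % ℓ, Nat.mod_lt r (by omega)⟩ with hr'
      have hval : ∀ t : Fin ℓ, ((r' + t : Fin ℓ) : ℕ) = (r + (t:ℕ)) % ℓ := by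
        intro t
        show ((r % ℓ) + (t:ℕ)) % ℓ = (r + (t:ℕ)) % ℓ
        rw [Nat.mod_add_mod]
      refine (Fintype.sum_equiv (Equiv.addLeft r') _ _ (fun t => ?_)).symm
      show G ((r + (t:ℕ)) % ℓ) = G ((r' + t : Fin ℓ) : ℕ)
      rw [hval t]
    rw [hrot]
    have hε'0 : ε' 0 = true := by
      simp [hε', Nat.mod_eq_of_lt hrℓ, hrt]
    obtain ⟨k, hk1, hkℓ, i, hsum, hbound⟩ := decomp A B θ u' ε' hε'0 ℓ hℓ1
    have hclosed : u' ℓ = u' 0 := by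
      rw [hu']
      show wc (r + ℓ) = wc (r + 0)
      have h4 : (r + ℓ) % ℓ = (r + 0) % ℓ := by rw [Nat.add_mod_right, Nat.add_zero]
      rw [← hmod (r + ℓ), ← hmod (r + 0), h4]
    have hdiag : mpChain A B k (Fin.cons 0 i) (u' 0) (u' ℓ) ≤ mpTr (mpChain A B k (Fin.cons 0 i)) := by
      rw [hclosed]
      exact Finset.le_sup (f := fun p => mpChain A B k (Fin.cons 0 i) p p) (Finset.mem_univ (u' 0))
    have htr := hchain k hk1 i (by omega)
    calc (∑ t ∈ Finset.range ℓ,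
            (if ε' t then ((-θ : ℝ) : MP) + A (u' t) (u' (t+1)) else B (u' t) (u' (t+1))))
        ≤ ((-((k:ℝ) * θ) : ℝ) : MP) + mpChain A B k (Fin.cons 0 i) (u' 0) (u' ℓ) := hbound
      _ ≤ ((-((k:ℝ) * θ) : ℝ) : MP) + (((k:ℝ) * θ : ℝ) : MP) := add_le_add_right (le_trans hdiag htr) _
      _ = ((0:ℝ) : MP) := by
          rw [← WithBot.coe_add]
          congr 1
          ring
  · -- all labels are B
    push_neg at hex
    have hall : ∀ t, t < ℓ → ε t = false := by
      intro t ht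
      cases h : ε t
      · rfl
      · exact absurd h (by simpa using hex t ht)
    have hBsum : (∑ t ∈ Finset.range ℓ,
          (if ε t then ((-θ : ℝ) : MP) + A (wc t) (wc (t+1)) else B (wc t) (wc (t+1))))
        = ∑ t ∈ Finset.range ℓ, B (wc t) (wc (t+1)) := by
      refine Finset.sum_congr rfl fun t ht => ?_
      rw [hall t (Finset.mem_range.1 ht)]
      simp
    rw [hBsum]
    have h1 := walk_le B ℓ wc
    have h2 : wc ℓ = wc 0 := by
      rw [hagree ℓ (le_refl ℓ), hagree 0 (by omega), hw]
    rw [h2] at h1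
    refine le_trans h1 ?_
    refine le_trans (Finset.le_sup (f := fun p => mpPow B ℓ p p) (Finset.mem_univ (wc 0))) ?_
    refine le_trans (Finset.le_sup (f := fun m => mpTr (mpPow B m)) (Finset.mem_Icc.2 ⟨hℓ1, hℓn⟩)) htrB

lemma pow_n_le_star (S : Fin n → Fin n → MP) (hn : 1 ≤ n)
    (hcw : ∀ ℓ, 1 ≤ ℓ → ℓ ≤ n → ∀ w : ℕ → Fin n, w ℓ = w 0 →
      (∑ t ∈ Finset.range ℓ, S (w t) (w (t+1))) ≤ ((0:ℝ) : MP)) :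
    ∀ i j, mpPow S n i j ≤ mpStar S i j := by
  intro i j
  obtain ⟨m, hm⟩ : ∃ m, n = m + 1 := ⟨n-1, by omega⟩
  subst hm
  apply pow_le_of_walks
  intro u h0 h1
  have hpq : ∃ p q : Fin (m+2), p ≠ q ∧ u (p:ℕ) = u (q:ℕ) := by
    have := Fintype.exists_ne_map_eq_of_card_lt (fun t : Fin (m+2) => u (t:ℕ)) (by simp)
    obtain ⟨p, q, hne, heq⟩ := this
    exact ⟨p, q, hne, heq⟩
  obtain ⟨p', q', hne, hval⟩ := hpq
  -- get p < q in ℕ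
  obtain ⟨p, q, hplt, hqle, huq⟩ : ∃ p q : ℕ, p < q ∧ q ≤ m + 1 ∧ u p = u q := by
    rcases lt_or_gt_of_ne hne with h | h
    · exact ⟨p', q', h, by omega, hval⟩
    · exact ⟨q', p', h, by omega, hval.symm⟩
  set ℓ := q - p with hℓ
  have hℓ1 : 1 ≤ ℓ := by omega
  have hℓn : ℓ ≤ m + 1 := by omega
  have hcyc : (∑ t ∈ Finset.range ℓ, S (u (p + t)) (u (p + t + 1))) ≤ ((0:ℝ) : MP) := by
    have := hcw ℓ hℓ1 hℓn (fun t => u (p + t)) (by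
      show u (p + ℓ) = u (p + 0)
      rw [show p + ℓ = q by omega, show p + 0 = p from rfl]
      exact huq.symm)
    exact this
  set L := m + 1 - ℓ with hL
  set u'' : ℕ → Fin (m+1) := fun t => if t < p then u t else u (t + ℓ) with hu''
  have hpL : p ≤ L := by omega
  have hpre : ∀ t, t < p → S (u'' t) (u'' (t+1)) = S (u t) (u (t+1)) := by
    intro t ht
    have e1 : u'' t = u t := by simp [hu'', ht]
    have e2 : u'' (t+1) = u (t+1) := by
      by_cases h : t + 1 < p
      · simp [hu'', h]
      · have hq : t + 1 = p := by omega
        have : u'' (t+1) = u (t + 1 + ℓ) := by simp [hu'', h]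
        rw [this]
        rw [show t + 1 + ℓ = q by omega, ← huq, hq]
    rw [e1, e2]
  have hpost : ∀ t, p ≤ t → S (u'' t) (u'' (t+1)) = S (u (t+ℓ)) (u (t+ℓ+1)) := by
    intro t ht
    have e1 : u'' t = u (t+ℓ) := by simp [hu'', show ¬ (t < p) by omega]
    have e2 : u'' (t+1) = u (t+1+ℓ) := by simp [hu'', show ¬ (t+1 < p) by omega]
    rw [e1, e2, show t + 1 + ℓ = t + ℓ + 1 by omega]
  have hsplit : ∑ t ∈ Finset.range (m+1), S (u t) (u (t+1))
      = ((∑ t ∈ Finset.range p, S (u t) (u (t+1)))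
          + ∑ t ∈ Finset.Ico p q, S (u t) (u (t+1)))
        + ∑ t ∈ Finset.Ico q (m+1), S (u t) (u (t+1)) := by
    rw [Finset.range_eq_Ico,
      ← Finset.sum_Ico_consecutive (fun t => S (u t) (u (t+1))) (Nat.zero_le q) hqle,
      ← Finset.sum_Ico_consecutive (fun t => S (u t) (u (t+1))) (Nat.zero_le p) (le_of_lt hplt),
      ← Finset.range_eq_Ico]
  have hmid : ∑ t ∈ Finset.Ico p q, S (u t) (u (t+1)) ≤ ((0:ℝ) : MP) := by
    rw [Finset.sum_Ico_eq_sum_range]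
    exact hcyc
  have hlast : ∑ t ∈ Finset.Ico q (m+1), S (u t) (u (t+1))
      = ∑ t ∈ Finset.Ico p L, S (u'' t) (u'' (t+1)) := by
    rw [Finset.sum_Ico_eq_sum_range, Finset.sum_Ico_eq_sum_range]
    have hLp : L - p = m + 1 - q := by omega
    rw [hLp]
    refine Finset.sum_congr rfl fun s _ => ?_
    rw [hpost (p + s) (by omega)]
    rw [show p + s + ℓ = q + s by omega]
  have hfirst : ∑ t ∈ Finset.range p, S (u t) (u (t+1))
      = ∑ t ∈ Finset.range p, S (u'' t) (u'' (t+1)) :=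
    Finset.sum_congr rfl fun t ht => (hpre t (Finset.mem_range.1 ht)).symm
  have hjoin : (∑ t ∈ Finset.range p, S (u'' t) (u'' (t+1)))
      + ∑ t ∈ Finset.Ico p L, S (u'' t) (u'' (t+1))
      = ∑ t ∈ Finset.range L, S (u'' t) (u'' (t+1)) := by
    rw [Finset.range_eq_Ico,
      Finset.sum_Ico_consecutive (fun t => S (u'' t) (u'' (t+1))) (Nat.zero_le p) hpL,
      ← Finset.range_eq_Ico]
  have h''0 : u'' 0 = i := by
    by_cases hp0 : 0 < p
    · rw [show u'' 0 = u 0 by simp [hu'', hp0], h0]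
    · have hp : p = 0 := by omega
      have : u'' 0 = u (0 + ℓ) := by simp [hu'', hp]
      rw [this, show (0:ℕ) + ℓ = q by omega, ← huq, hp, h0]
  have h''L : u'' L = j := by
    have : u'' L = u (L + ℓ) := by simp [hu'', show ¬ (L < p) by omega]
    rw [this, show L + ℓ = m + 1 by omega, h1]
  calc ∑ t ∈ Finset.range (m+1), S (u t) (u (t+1))
      = ((∑ t ∈ Finset.range p, S (u t) (u (t+1)))
          + ∑ t ∈ Finset.Ico p q, S (u t) (u (t+1)))
        + ∑ t ∈ Finset.Ico q (m+1), S (u t) (u (t+1)) := hsplit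
    _ ≤ ((∑ t ∈ Finset.range p, S (u t) (u (t+1))) + ((0:ℝ):MP))
        + ∑ t ∈ Finset.Ico q (m+1), S (u t) (u (t+1)) :=
        add_le_add_left (add_le_add_right hmid _) _
    _ = (∑ t ∈ Finset.range p, S (u t) (u (t+1)))
        + ∑ t ∈ Finset.Ico q (m+1), S (u t) (u (t+1)) := by
        rw [WithBot.coe_zero, add_zero]
    _ = ∑ t ∈ Finset.range L, S (u'' t) (u'' (t+1)) := by
        rw [hfirst, hlast, hjoin]
    _ ≤ mpPow S L (u'' 0) (u'' L) := walk_le S L u''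
    _ = mpPow S L i j := by rw [h''0, h''L]
    _ ≤ mpStar S i j :=
        Finset.le_sup (f := fun k => mpPow S k i j) (Finset.mem_range.2 (by omega))

end layer5

section layer6
variable {n : ℕ}

lemma all_bot_pow (A : Fin n → Fin n → MP) (hA : ∀ i j, A i j = ⊥) :
    ∀ m, 1 ≤ m → ∀ i j, mpPow A m i j = ⊥ := by
  intro m hm i j
  obtain ⟨m', rfl⟩ : ∃ m', m = m' + 1 := ⟨m - 1, by omega⟩
  show (Finset.univ.sup fun k => mpPow A m' i k + A k j) = ⊥
  rw [← le_bot_iff]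
  refine Finset.sup_le fun k _ => ?_
  simp [hA k j]

lemma tr_map_div_le (M : Fin n → Fin n → MP) (k : ℕ) (hk : 1 ≤ k) (c : ℝ)
    (h : mpTr M ≤ (((k:ℝ) * c : ℝ) : MP)) :
    (mpTr M).map (fun t => t / (k:ℝ)) ≤ (c : MP) := by
  cases htr : mpTr M with
  | none => exact bot_le
  | some a =>
      rw [htr] at h
      have ha : a ≤ (k:ℝ) * c := WithBot.coe_le_coe.1 h
      have hk0 : (0:ℝ) < (k:ℝ) := by positivity
      have hd : a / (k:ℝ) ≤ c := by
        rw [div_le_iff₀ hk0]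
        linarith [mul_comm c (k:ℝ)]
      show WithBot.map (fun t => t / (k:ℝ)) ((a : ℝ) : MP) ≤ (c : MP)
      rw [WithBot.map_coe]
      exact WithBot.coe_le_coe.2 hd

lemma tr_le_of_diag_bound (M : Fin n → Fin n → MP) (x : Fin n → ℝ) (d : ℝ)
    (h : ∀ i, M i i + ((x i : ℝ) : MP) ≤ (d : MP) + ((x i : ℝ) : MP)) :
    mpTr M ≤ (d : MP) := by
  refine Finset.sup_le fun i _ => ?_
  exact mp_add_coe_cancel (x i) (h i)

lemma mp_shuffle (a : MP) (r s : ℝ) (h : ((-r : ℝ) : MP) + a ≤ (s : MP)) :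
    ((-s : ℝ) : MP) + a ≤ (r : MP) := by
  have h2 := add_le_add_right h ((r : ℝ) : MP)
  rw [← add_assoc, ← WithBot.coe_add, add_neg_cancel, WithBot.coe_zero, zero_add,
    ← WithBot.coe_add] at h2
  have h3 := add_le_add_right h2 ((-s : ℝ) : MP)
  rw [← WithBot.coe_add] at h3
  have he : -s + (r + s) = r := by ring
  rw [he] at h3
  exact h3

end layer6

/-- the matrix  θ⁻¹A ⊕ B -/
def mpS {n : ℕ} (A B : Fin n → Fin n → MP) (θ : ℝ) : Fin n → Fin n → MP :=
  fun p q => max (((-θ : ℝ) : MP) + A p q) (B p q)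

lemma mp_unshuffle (a : MP) (r s : ℝ) (h : ((-r : ℝ) : MP) + a ≤ (s : MP)) :
    a ≤ ((r + s : ℝ) : MP) := by
  have h2 := add_le_add_right h ((r : ℝ) : MP)
  rw [← add_assoc, ← WithBot.coe_add, add_neg_cancel, WithBot.coe_zero, zero_add,
    ← WithBot.coe_add] at h2
  exact h2

lemma map_div_le_unmap (a : MP) (k : ℕ) (hk : 1 ≤ k) (c : ℝ)
    (h : a.map (fun t => t / (k:ℝ)) ≤ (c : MP)) : a ≤ (((k:ℝ) * c : ℝ) : MP) := by
  cases a with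
  | none => exact bot_le
  | some v =>
      have h1 : v / (k:ℝ) ≤ c := WithBot.coe_le_coe.1 h
      refine WithBot.coe_le_coe.2 ?_
      have hk0 : (0:ℝ) < (k:ℝ) := by positivity
      rw [div_le_iff₀ hk0] at h1
      calc v ≤ c * k := h1
        _ = k * c := mul_comm _ _


/-- Solution of minimize x⁻ A x subject to B x ⊕ g ≤ x: the minimum equals
θ = λ ⊕ ⨁_{k=1}^{n-1} ⨁_{1≤i₁+⋯+iₖ≤n-k} tr^{1/k}(A B^{i₁} ⋯ A B^{iₖ}),
attained exactly at x = (θ⁻¹A ⊕ B)* u for regular u ≥ g. -/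
theorem maxplus_opt_Bxg {n : ℕ} (A B : Fin n → Fin n → MP) (g : Fin n → MP)
    (hlam : mpLam A ≠ ⊥) (hB : mpTR B ≤ ((0:ℝ) : MP)) (θ : ℝ)
    (hθ : (θ : MP) = max (mpLam A)
        ((Finset.Icc 1 (n-1)).sup fun k =>
          (Finset.Icc 1 (n-k)).sup fun s =>
            (Finset.Nat.antidiagonalTuple k s).sup fun i =>
              (mpTr (mpChain A B k (Fin.cons 0 i))).map (fun t => t / (k : ℝ)))) :
    (∀ x : Fin n → ℝ,
      (∀ i, max (mpMulV B (fun j => (x j : MP)) i) (g i) ≤ (x i : MP)) →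
      (θ : MP) ≤ Finset.univ.sup fun i => Finset.univ.sup fun j =>
        ((-(x i) : ℝ) : MP) + A i j + (x j : MP)) ∧
    (∀ x : Fin n → ℝ,
      ((∀ i, max (mpMulV B (fun j => (x j : MP)) i) (g i) ≤ (x i : MP)) ∧
        (Finset.univ.sup fun i => Finset.univ.sup fun j =>
          ((-(x i) : ℝ) : MP) + A i j + (x j : MP)) = (θ : MP)) ↔
      (∃ u : Fin n → ℝ, (∀ i, g i ≤ (u i : MP)) ∧
        ∀ i, (x i : MP) =
          mpMulV (mpStar (fun p q => max (((-θ : ℝ) : MP) + A p q) (B p q)))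
            (fun j => (u j : MP)) i)) := by
  classical
  have hn : 1 ≤ n := by
    by_contra h
    have hn0 : n = 0 := by omega
    apply hlam
    subst hn0
    show (Finset.Icc 1 0).sup _ = ⊥
    rw [Finset.Icc_eq_empty (by omega), Finset.sup_empty]
  have hlamθ : mpLam A ≤ (θ : MP) := by rw [hθ]; exact le_max_left _ _
  have hAk : ∀ k, 1 ≤ k → k ≤ n → mpTr (mpPow A k) ≤ (((k:ℝ) * θ : ℝ) : MP) := by
    intro k h1 h2
    refine map_div_le_unmap _ k h1 θ ?_
    refine le_trans ?_ hlamθ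
    exact Finset.le_sup (f := fun m => (mpTr (mpPow A m)).map (fun t => t / (m:ℝ)))
      (Finset.mem_Icc.2 ⟨h1, h2⟩)
  have hchainθ : ∀ k, 1 ≤ k → ∀ i : Fin k → ℕ, k + (∑ s, i s) ≤ n →
      mpTr (mpChain A B k (Fin.cons 0 i)) ≤ (((k:ℝ) * θ : ℝ) : MP) := by
    intro k hk1 i hkn
    by_cases hs0 : (∑ s, i s) = 0
    · have hcons : ∀ s : Fin (k+1), (Fin.cons 0 i : Fin (k+1) → ℕ) s = 0 := by
        intro s
        refine Fin.cases ?_ (fun q => ?_) s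
        · simp
        · simp [Finset.sum_eq_zero_iff.1 hs0 q (Finset.mem_univ q)]
      rw [chain_zero A B k _ hcons]
      exact hAk k hk1 (by omega)
    · have hmem1 : k ∈ Finset.Icc 1 (n-1) := Finset.mem_Icc.2 ⟨hk1, by omega⟩
      have hmem2 : (∑ s, i s) ∈ Finset.Icc 1 (n-k) := Finset.mem_Icc.2 ⟨by omega, by omega⟩
      have hmem3 : i ∈ Finset.Nat.antidiagonalTuple k (∑ s, i s) :=
        Finset.Nat.mem_antidiagonalTuple.2 rfl
      refine map_div_le_unmap _ k hk1 θ ?_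
      rw [hθ]
      refine le_trans ?_ (le_max_right _ _)
      refine le_trans ?_ (Finset.le_sup (f := fun k =>
        (Finset.Icc 1 (n-k)).sup fun s =>
          (Finset.Nat.antidiagonalTuple k s).sup fun i =>
            (mpTr (mpChain A B k (Fin.cons 0 i))).map (fun t => t / (k : ℝ))) hmem1)
      refine le_trans ?_ (Finset.le_sup (f := fun s =>
        (Finset.Nat.antidiagonalTuple k s).sup fun i =>
          (mpTr (mpChain A B k (Fin.cons 0 i))).map (fun t => t / (k : ℝ))) hmem2)
      exact Finset.le_sup (f := fun i =>
        (mpTr (mpChain A B k (Fin.cons 0 i))).map (fun t => t / (k : ℝ))) hmem3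
  -- the lower bound
  have hlow : ∀ x : Fin n → ℝ,
      (∀ i, max (mpMulV B (fun j => (x j : MP)) i) (g i) ≤ (x i : MP)) →
      (θ : MP) ≤ Finset.univ.sup fun i => Finset.univ.sup fun j =>
        ((-(x i) : ℝ) : MP) + A i j + (x j : MP) := by
    intro x hfeas
    have hterm : ∀ i j, ((-(x i) : ℝ) : MP) + A i j + ((x j : ℝ) : MP)
        ≤ Finset.univ.sup fun i => Finset.univ.sup fun j =>
            ((-(x i) : ℝ) : MP) + A i j + (x j : MP) := by
      intro i j
      refine le_trans (Finset.le_sup (f := fun j => ((-(x i) : ℝ) : MP) + A i j + (x j : MP))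
        (Finset.mem_univ j)) ?_
      exact Finset.le_sup (f := fun i => Finset.univ.sup fun j =>
        ((-(x i) : ℝ) : MP) + A i j + (x j : MP)) (Finset.mem_univ i)
    cases hμ : (Finset.univ.sup fun i => Finset.univ.sup fun j =>
        ((-(x i) : ℝ) : MP) + A i j + (x j : MP)) with
    | bot =>
        exfalso
        have hAbot : ∀ i j, A i j = ⊥ := by
          intro i j
          have h1 := hterm i j
          rw [hμ] at h1
          have h2 := le_bot_iff.1 h1
          cases hA : A i j with
          | none => rfl
          | some a =>
              exfalso
              rw [hA] at h2
              have h3 : ((-(x i) : ℝ) : MP) + ((a : ℝ) : MP) + ((x j : ℝ) : MP) = ⊥ := h2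
              rw [← WithBot.coe_add, ← WithBot.coe_add] at h3
              exact WithBot.coe_ne_bot h3
        apply hlam
        refine le_bot_iff.1 (Finset.sup_le fun m hm => ?_)
        obtain ⟨hm1, _⟩ := Finset.mem_Icc.1 hm
        have htr : mpTr (mpPow A m) = ⊥ :=
          le_bot_iff.1 (Finset.sup_le fun i _ => le_of_eq (all_bot_pow A hAbot m hm1 i i))
        rw [htr]
        exact bot_le
    | coe c =>
        have hbA : ∀ i j, A i j + ((x j : ℝ) : MP) ≤ ((c : ℝ) : MP) + ((x i : ℝ) : MP) := by
          intro i j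
          have h1 := hterm i j
          rw [hμ, add_assoc] at h1
          have h2 := mp_unshuffle _ _ _ h1
          rw [← WithBot.coe_add, add_comm c (x i)]
          exact h2
        have hbB : ∀ i j, B i j + ((x j : ℝ) : MP) ≤ (((0:ℝ)) : MP) + ((x i : ℝ) : MP) := by
          intro i j
          rw [WithBot.coe_zero, zero_add]
          refine le_trans ?_ (le_trans (le_max_left _ _) (hfeas i))
          exact Finset.le_sup (f := fun j => B i j + ((x j : ℝ) : MP)) (Finset.mem_univ j)
        rw [hθ]
        refine max_le ?_ ?_
        · refine Finset.sup_le fun m hm => ?_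
          obtain ⟨hm1, _⟩ := Finset.mem_Icc.1 hm
          refine tr_map_div_le _ m hm1 c ?_
          exact tr_le_of_diag_bound _ x _ (fun i => bound_pow x A c hbA m i i)
        · refine Finset.sup_le fun k hk => Finset.sup_le fun s _ => Finset.sup_le fun i _ => ?_
          obtain ⟨hk1, _⟩ := Finset.mem_Icc.1 hk
          refine tr_map_div_le _ k hk1 c ?_
          exact tr_le_of_diag_bound _ x _ (fun p => bound_chain x A B c hbA hbB k (Fin.cons 0 i) p p)
  refine ⟨hlow, fun x => ⟨?_, ?_⟩⟩
  · -- forward: optimal solution is of star form (u := x)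
    rintro ⟨hfeas, hobj⟩
    refine ⟨x, fun i => le_trans (le_max_right _ _) (hfeas i), fun i => ?_⟩
    have hSx : ∀ p, mpMulV (mpS A B θ) (fun j => ((x j : ℝ) : MP)) p ≤ ((x p : ℝ) : MP) := by
      intro p
      refine Finset.sup_le fun q _ => ?_
      show max (((-θ : ℝ) : MP) + A p q) (B p q) + ((x q : ℝ) : MP) ≤ _
      rw [← max_add_add_right]
      refine max_le ?_ ?_
      · have h1 : ((-(x p) : ℝ) : MP) + A p q + ((x q : ℝ) : MP) ≤ (θ : MP) := by
          rw [← hobj]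
          refine le_trans (Finset.le_sup (f := fun j => ((-(x p) : ℝ) : MP) + A p j + (x j : MP))
            (Finset.mem_univ q)) ?_
          exact Finset.le_sup (f := fun i => Finset.univ.sup fun j =>
            ((-(x i) : ℝ) : MP) + A i j + (x j : MP)) (Finset.mem_univ p)
        rw [add_assoc] at h1
        have h2 := mp_shuffle _ _ _ h1
        rw [← add_assoc] at h2
        exact h2
      · refine le_trans ?_ (le_trans (le_max_left _ _) (hfeas p))
        exact Finset.le_sup (f := fun j => B p j + ((x j : ℝ) : MP)) (Finset.mem_univ q)
    have hpowx : ∀ ℓ p, mpMulV (mpPow (mpS A B θ) ℓ) (fun j => ((x j : ℝ) : MP)) p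
        ≤ ((x p : ℝ) : MP) := by
      intro ℓ
      induction ℓ with
      | zero => exact fun p => le_of_eq (congrFun (mpMulV_id _) p)
      | succ ℓ ih =>
          intro p
          rw [mpPow_succ', mpMulV_mulM]
          exact le_trans (mpMulV_mono_vec _ ih p) (hSx p)
    have hstarx : mpMulV (mpStar (mpS A B θ)) (fun j => ((x j : ℝ) : MP)) i
        = ((x i : ℝ) : MP) := by
      apply le_antisymm
      · refine Finset.sup_le fun j _ => ?_
        show ((Finset.range n).sup fun ℓ => mpPow (mpS A B θ) ℓ i j) + _ ≤ _
        rw [mp_sup_add]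
        refine Finset.sup_le fun ℓ _ => ?_
        refine le_trans ?_ (hpowx ℓ i)
        exact Finset.le_sup (f := fun j => mpPow (mpS A B θ) ℓ i j + ((x j : ℝ) : MP))
          (Finset.mem_univ j)
      · refine le_trans (le_of_eq (congrFun (mpMulV_id (fun j => ((x j : ℝ) : MP))) i).symm) ?_
        refine mpMulV_mono_mat (fun p q => ?_) _ i
        exact Finset.le_sup (f := fun ℓ => mpPow (mpS A B θ) ℓ p q) (Finset.mem_range.2 hn)
    exact hstarx.symm
  · -- backward : every star-form vector is feasible and optimal
    rintro ⟨u, hgu, hxu⟩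
    have hcw : ∀ ℓ, 1 ≤ ℓ → ℓ ≤ n → ∀ w : ℕ → Fin n, w ℓ = w 0 →
        (∑ t ∈ Finset.range ℓ, mpS A B θ (w t) (w (t+1))) ≤ ((0:ℝ) : MP) :=
      fun ℓ h1 h2 w hw => closed_walk_le A B θ hB hchainθ ℓ h1 h2 w hw
    have hSn := pow_n_le_star (mpS A B θ) hn hcw
    have hSstar : ∀ p q, mpMulM (mpS A B θ) (mpStar (mpS A B θ)) p q
        ≤ mpStar (mpS A B θ) p q := by
      intro p q
      refine Finset.sup_le fun k _ => ?_
      show mpS A B θ p k + ((Finset.range n).sup fun ℓ => mpPow (mpS A B θ) ℓ k q) ≤ _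
      rw [mp_add_sup]
      refine Finset.sup_le fun ℓ hℓ => ?_
      have h1 : mpS A B θ p k + mpPow (mpS A B θ) ℓ k q ≤ mpPow (mpS A B θ) (ℓ+1) p q := by
        rw [mpPow_succ']
        exact Finset.le_sup (f := fun k => mpS A B θ p k + mpPow (mpS A B θ) ℓ k q)
          (Finset.mem_univ k)
      have hln : ℓ + 1 ≤ n := Finset.mem_range.1 hℓ
      rcases eq_or_lt_of_le hln with he | hl
      · rw [he] at h1
        exact le_trans h1 (hSn p q)
      · exact le_trans h1 (Finset.le_sup (f := fun t => mpPow (mpS A B θ) t p q)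
          (Finset.mem_range.2 hl))
    have hxvf : (fun j => ((x j : ℝ) : MP))
        = mpMulV (mpStar (mpS A B θ)) (fun j => ((u j : ℝ) : MP)) := funext (fun p => hxu p)
    have hSxv : ∀ p, mpMulV (mpS A B θ) (fun j => ((x j : ℝ) : MP)) p ≤ ((x p : ℝ) : MP) := by
      intro p
      calc mpMulV (mpS A B θ) (fun j => ((x j : ℝ) : MP)) p
          = mpMulV (mpMulM (mpS A B θ) (mpStar (mpS A B θ))) (fun j => ((u j : ℝ) : MP)) p := by
            rw [hxvf, mpMulV_mulM]
        _ ≤ mpMulV (mpStar (mpS A B θ)) (fun j => ((u j : ℝ) : MP)) p := mpMulV_mono_mat hSstar _ p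
        _ = ((x p : ℝ) : MP) := (hxu p).symm
    have hfeas : ∀ i, max (mpMulV B (fun j => ((x j) : MP)) i) (g i) ≤ ((x i) : MP) := by
      intro i
      refine max_le ?_ ?_
      · exact le_trans (mpMulV_mono_mat (fun p q => le_max_right _ _) _ i) (hSxv i)
      · refine le_trans (hgu i) ?_
        rw [hxu i]
        have h0 : ((0:ℝ):MP) = mpPow (mpS A B θ) 0 i i := by simp [mpPow, mpId]
        have h0' : ((0:ℝ):MP) ≤ mpStar (mpS A B θ) i i :=
          le_trans (le_of_eq h0)
            (Finset.le_sup (f := fun ℓ => mpPow (mpS A B θ) ℓ i i) (Finset.mem_range.2 hn))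
        refine le_trans ?_ (Finset.le_sup
          (f := fun j => mpStar (mpS A B θ) i j + ((u j : ℝ) : MP)) (Finset.mem_univ i))
        calc ((u i : ℝ) : MP) = ((0:ℝ):MP) + ((u i : ℝ):MP) := by rw [WithBot.coe_zero, zero_add]
          _ ≤ mpStar (mpS A B θ) i i + ((u i : ℝ):MP) := add_le_add_left h0' _
    refine ⟨hfeas, le_antisymm ?_ (hlow x hfeas)⟩
    refine Finset.sup_le fun p _ => Finset.sup_le fun q _ => ?_
    have h1 : mpS A B θ p q + ((x q : ℝ):MP) ≤ ((x p : ℝ):MP) :=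
      le_trans (Finset.le_sup (f := fun j => mpS A B θ p j + ((x j:ℝ):MP)) (Finset.mem_univ q))
        (hSxv p)
    have h2 : ((-θ:ℝ):MP) + A p q + ((x q:ℝ):MP) ≤ ((x p:ℝ):MP) :=
      le_trans (add_le_add_left (le_max_left _ _) _) h1
    rw [add_assoc] at h2
    have h3 := mp_shuffle _ _ _ h2
    rw [← add_assoc] at h3
    exact h3
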